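/- If X is a normal topological space, then t_m(X) = t₀(X): the minitightness of X equals its functional tightness. -/

import Mathlib

open Cardinal Set

/-- The functional tightness of a space. -/
noncomputable def functionalTightness (X : Type u) [TopologicalSpace X] : Cardinal.{u} :=
  sInf {κ : Cardinal.{u} | Cardinal.aleph0 ≤ κ ∧
    ∀ f : X → ℝ,
      (∀ A : Set X, #A ≤ κ → Continuous (A.restrict f)) → Continuous f}

/-- The minitightness of a space. -/
noncomputable def minitightness (X : Type u) [TopologicalSpace X] : Cardinal.{u} :=
  sInf {κ : Cardinal.{u} | Cardinal.aleph0 ≤ κ ∧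
    ∀ f : X → ℝ,
      (∀ A : Set X, #A ≤ κ → ∃ g : X → ℝ, Continuous g ∧ ∀ x ∈ A, g x = f x) →
      Continuous f}

/-- A κ-continuous function on a normal space is strictly κ-continuous. -/
lemma exists_extension_of_kappa_continuous {X : Type u} [TopologicalSpace X] [T4Space X]
    {κ : Cardinal.{u}} (hκ : Cardinal.aleph0 ≤ κ) {f : X → ℝ}
    (hf : ∀ A : Set X, #A ≤ κ → Continuous (A.restrict f))
    (A : Set X) (hA : #A ≤ κ) : ∃ g : X → ℝ, Continuous g ∧ ∀ x ∈ A, g x = f x := by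
  -- Step 1: f tends to f x along A for every x in closure A
  have step1 : ∀ x ∈ closure A, Filter.Tendsto f (nhdsWithin x A) (nhds (f x)) := by
    intro x _
    have hins : #(insert x A : Set X) ≤ κ := by
      refine le_trans (Cardinal.mk_insert_le) ?_
      calc #A + 1 ≤ κ + 1 := by exact add_le_add hA le_rfl
        _ = κ := Cardinal.add_one_eq hκ
    have hcont : Continuous ((insert x A : Set X).restrict f) := hf _ hins
    have hon : ContinuousOn f (insert x A) :=
      (continuousOn_iff_continuous_restrict).2 hcont
    have := (hon x (mem_insert x A)).mono (subset_insert x A)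
    exact this
  -- Step 2: f is continuous on closure A
  have step2 : ContinuousOn f (closure A) := by
    intro x hx
    rw [ContinuousWithinAt, Metric.tendsto_nhds]
    intro ε hε
    have h3 : (0:ℝ) < ε / 3 := by linarith
    have hx' := step1 x hx
    have hmem : {a | dist (f a) (f x) < ε / 3} ∈ nhdsWithin x A :=
      hx' (Metric.ball_mem_nhds (f x) h3)
    rw [mem_nhdsWithin] at hmem
    obtain ⟨U, hUopen, hxU, hU⟩ := hmem
    rw [Filter.eventually_iff, mem_nhdsWithin]
    refine ⟨U, hUopen, hxU, ?_⟩
    rintro y ⟨hyU, hyC⟩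
    -- y ∈ closure A; use step1 at y
    have hy' := step1 y hyC
    have hmem' : {a | dist (f a) (f y) < ε / 3} ∈ nhdsWithin y A :=
      hy' (Metric.ball_mem_nhds (f y) h3)
    rw [mem_nhdsWithin] at hmem'
    obtain ⟨V, hVopen, hyV, hV⟩ := hmem'
    have : ∃ a, a ∈ (U ∩ V) ∩ A := by
      rw [mem_closure_iff] at hyC
      exact hyC (U ∩ V) (hUopen.inter hVopen) ⟨hyU, hyV⟩
    obtain ⟨a, ⟨haU, haV⟩, haA⟩ := this
    have d1 : dist (f a) (f x) < ε / 3 := hU ⟨haU, haA⟩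
    have d2 : dist (f a) (f y) < ε / 3 := hV ⟨haV, haA⟩
    calc dist (f y) (f x) ≤ dist (f y) (f a) + dist (f a) (f x) := dist_triangle _ _ _
      _ < ε / 3 + ε / 3 := by rw [dist_comm (f y) (f a)]; exact add_lt_add d2 d1
      _ < ε := by linarith
  -- Tietze extension from the closed set closure A
  have hclosed : IsClosed (closure A) := isClosed_closure
  obtain ⟨g, hg⟩ := ContinuousMap.exists_restrict_eq hclosed
    ⟨(closure A).restrict f, (continuousOn_iff_continuous_restrict).1 step2⟩
  refine ⟨g, g.continuous, fun x hxA => ?_⟩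
  have := congrFun (congrArg DFunLike.coe hg) ⟨x, subset_closure hxA⟩
  exact this

/-- For a normal space, minitightness equals functional tightness. -/
theorem minitightness_eq_functionalTightness_of_normal
    (X : Type u) [TopologicalSpace X] [T4Space X] :
    minitightness X = functionalTightness X := by
  unfold minitightness functionalTightness
  congr 1
  ext κ
  constructor
  · rintro ⟨hκ, hm⟩
    refine ⟨hκ, fun f hf => ?_⟩
    exact hm f (exists_extension_of_kappa_continuous hκ hf)
  · rintro ⟨hκ, hm⟩
    refine ⟨hκ, fun f hf => ?_⟩
    apply hm f
    intro A hA
    obtain ⟨g, hg, hgf⟩ := hf A hA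
    have : A.restrict f = A.restrict g := by
      funext a; exact (hgf a a.2).symm
    rw [this]
    exact hg.comp continuous_subtype_val
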